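/- Let n, d, K ∈ ℕ, α = n/d, λ₀ > 0, X ∈ ℝ^{n×d}, y ∈ ℝ^{n×K}. For each row y^{[i]} ∈ ℝ^{1×K} of y, let θ ↦ l(θ; y^{[i]}) be a convex differentiable function on ℝ^{1×K}. Let V ∈ ℝ^{K×K} be symmetric positive definite and Q ∈ ℝ^{K×K} satisfy α·Q·V = λ₀·I_K − V. For γ ∈ ℝ^{1×K} and y-row y', let m(γ; y') be a minimizer of θ ↦ l(θ; y') + (1/2)(γ−θ)V(γ−θ)ᵀ, and set f(γ; y') := m(γ; y') − γ; for a matrix γ ∈ ℝ^{n×K}, f(γ; y) ∈ ℝ^{n×K} is defined row-wise, with i-th row f(γ^{[i]}; y^{[i]}). Suppose (γ, ω) ∈ ℝ^{n×K} × ℝ^{d×K} satisfies the AMP fixed-point equations γ = Xω − f(γ; y) and ω = Xᵀf(γ; y) − α·ω·Q. Then ω is the unique minimizer of the convex optimization ω ↦ Σ_{i=1}^{n} l(x_iᵀω; y^{[i]}) + (λ₀/2)‖ω‖_F², where x_iᵀ denotes the i-th row of X. -/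

import Mathlib

open Matrix

/-- Entrywise expansion of the bilinear form `a ᵥ* V ⬝ᵥ b`. -/
lemma vecMul_dot_expand {K : ℕ} (V : Matrix (Fin K) (Fin K) ℝ) (a b : Fin K → ℝ) :
    a ᵥ* V ⬝ᵥ b = ∑ j, ∑ k, a j * V j k * b k := by
  simp only [dotProduct, Matrix.vecMul, Finset.sum_mul]
  rw [Finset.sum_comm]

/-- Symmetry of the bilinear form attached to a real symmetric matrix. -/
lemma quad_symm {K : ℕ} {V : Matrix (Fin K) (Fin K) ℝ} (hsym : Vᵀ = V)
    (a b : Fin K → ℝ) : a ᵥ* V ⬝ᵥ b = b ᵥ* V ⬝ᵥ a := by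
  have hV' : ∀ j k, V k j = V j k := fun j k => congrFun (congrFun hsym j) k
  rw [vecMul_dot_expand, vecMul_dot_expand, Finset.sum_comm]
  refine Finset.sum_congr rfl fun k _ => Finset.sum_congr rfl fun j _ => ?_
  rw [hV' j k]
  ring

/-- Expansion of the quadratic form along a line (pure bilinearity). -/
lemma quad_expand' {K : ℕ} (V : Matrix (Fin K) (Fin K) ℝ)
    (u h : Fin K → ℝ) (t : ℝ) :
    (u - t • h) ᵥ* V ⬝ᵥ (u - t • h)
      = u ᵥ* V ⬝ᵥ u - t * (u ᵥ* V ⬝ᵥ h) - t * (h ᵥ* V ⬝ᵥ u)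
        + t ^ 2 * (h ᵥ* V ⬝ᵥ h) := by
  simp only [vecMul_dot_expand, Finset.mul_sum, ← Finset.sum_sub_distrib,
    ← Finset.sum_add_distrib, Pi.sub_apply, Pi.smul_apply, smul_eq_mul]
  refine Finset.sum_congr rfl fun j _ => Finset.sum_congr rfl fun k _ => ?_
  ring

/-- Expansion of the quadratic form along a line, symmetric version. -/
lemma quad_expand {K : ℕ} {V : Matrix (Fin K) (Fin K) ℝ} (hsym : Vᵀ = V)
    (u h : Fin K → ℝ) (t : ℝ) :
    (u - t • h) ᵥ* V ⬝ᵥ (u - t • h)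
      = u ᵥ* V ⬝ᵥ u - 2 * t * (u ᵥ* V ⬝ᵥ h) + t ^ 2 * (h ᵥ* V ⬝ᵥ h) := by
  rw [quad_expand', quad_symm hsym h u]
  ring

/-- The "gradient inequality" at the prox point, derived with no calculus:
from minimality of `m` and convexity of `l₁`. -/
lemma prox_grad_ineq {K : ℕ} {V : Matrix (Fin K) (Fin K) ℝ} (hV : V.PosDef)
    (l₁ : (Fin K → ℝ) → ℝ) (hc : ConvexOn ℝ Set.univ l₁)
    (γ m : Fin K → ℝ)
    (hm : IsMinOn (fun θ => l₁ θ + (1 / 2) * ((γ - θ) ᵥ* V ⬝ᵥ (γ - θ))) Set.univ m)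
    (h : Fin K → ℝ) :
    l₁ m + ((γ - m) ᵥ* V ⬝ᵥ h) ≤ l₁ (m + h) := by
  have hsym : Vᵀ = V := hV.1
  set u : Fin K → ℝ := γ - m with hu
  set c : ℝ := u ᵥ* V ⬝ᵥ h with hc'
  set dd : ℝ := h ᵥ* V ⬝ᵥ h with hdd
  have hd0 : 0 ≤ dd := by
    have := hV.posSemidef.dotProduct_mulVec_nonneg h
    simpa [dotProduct_mulVec, star_trivial, hdd] using this
  -- key estimate: for every t ∈ (0,1], c ≤ (l₁ (m+h) - l₁ m) + (t/2) * dd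
  have key : ∀ t : ℝ, 0 < t → t ≤ 1 → c ≤ (l₁ (m + h) - l₁ m) + (t / 2) * dd := by
    intro t ht ht1
    have hmin := hm (Set.mem_univ (m + t • h))
    simp only [Set.mem_setOf_eq] at hmin
    have hgam : γ - (m + t • h) = u - t • h := by
      rw [hu]; abel
    have hmin' : l₁ m + (1/2) * (u ᵥ* V ⬝ᵥ u)
        ≤ l₁ (m + t • h) + (1/2) * (u ᵥ* V ⬝ᵥ u - 2 * t * c + t ^ 2 * dd) := by
      have h2 := hmin
      rw [hgam, quad_expand hsym u h t] at h2
      simpa [hu, hc', hdd] using h2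
    -- convexity: l₁ (m + t•h) ≤ (1-t) * l₁ m + t * l₁ (m+h)
    have hcvx : l₁ (m + t • h) ≤ (1 - t) * l₁ m + t * l₁ (m + h) := by
      have harg : (1 - t) • m + t • (m + h) = m + t • h := by
        rw [sub_smul, one_smul, smul_add]; abel
      have h3 := hc.2 (Set.mem_univ m) (Set.mem_univ (m + h))
        (by linarith : (0:ℝ) ≤ 1 - t) (le_of_lt ht) (by ring)
      rwa [harg] at h3
    nlinarith
  -- pass to the limit t → 0⁺
  have hfin : c ≤ l₁ (m + h) - l₁ m := by
    by_contra hlt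
    push_neg at hlt
    set A : ℝ := l₁ (m + h) - l₁ m with hA
    set ε : ℝ := (c - A) / 2 with hε
    have hεpos : 0 < ε := by simp only [hε]; linarith
    rcases le_or_gt dd 0 with hdle | hdpos
    · have := key 1 one_pos le_rfl
      nlinarith
    · set t : ℝ := min 1 (ε / dd) with htdef
      have ht0 : 0 < t := lt_min one_pos (div_pos hεpos hdpos)
      have ht1 : t ≤ 1 := min_le_left _ _
      have hk := key t ht0 ht1
      have h2 : t ≤ ε / dd := min_le_right _ _
      have htd : (t / 2) * dd ≤ ε := by
        have : t * dd ≤ ε := by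
          calc t * dd ≤ (ε / dd) * dd := by nlinarith
          _ = ε := by field_simp
        nlinarith
      simp only [hε] at htd hk
      linarith
  linarith

/-- Remark 2 of the paper: a fixed point `(γ, ω)` of the AMP dynamics, with the
proximal-based nonlinearity `f(γ;y) = m(γ;y) − γ` and `α·Q·V = λ₀·I − V`, coincides with
the unique minimizer of the ridge-regularized convex optimization
`ω ↦ Σᵢ l(xᵢᵀω; y⁽ⁱ⁾) + (λ₀/2)‖ω‖_F²`. -/
theorem statement15 (n d K : ℕ) (hd : 0 < d) (lam₀ : ℝ) (hlam : 0 < lam₀)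
    (X : Matrix (Fin n) (Fin d) ℝ) (y : Fin n → Fin K → ℝ)
    (l : (Fin K → ℝ) → (Fin K → ℝ) → ℝ)
    (hconv : ∀ y', ConvexOn ℝ Set.univ (l · y'))
    (hdiff : ∀ y', Differentiable ℝ (l · y'))
    (V : Matrix (Fin K) (Fin K) ℝ) (hV : V.PosDef)
    (Q : Matrix (Fin K) (Fin K) ℝ)
    (hQ : ((n : ℝ) / d) • (Q * V) = lam₀ • (1 : Matrix (Fin K) (Fin K) ℝ) - V)
    (mprox : (Fin K → ℝ) → (Fin K → ℝ) → Fin K → ℝ)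
    (hm : ∀ γ y', IsMinOn (fun θ => l θ y' + (1 / 2) * ((γ - θ) ᵥ* V ⬝ᵥ (γ - θ)))
      Set.univ (mprox γ y'))
    (γ : Matrix (Fin n) (Fin K) ℝ) (ω : Matrix (Fin d) (Fin K) ℝ)
    (hfix1 : γ = X * ω - Matrix.of (fun i => mprox (γ i) (y i) - γ i))
    (hfix2 : ω = Xᵀ * Matrix.of (fun i => mprox (γ i) (y i) - γ i)
      - ((n : ℝ) / d) • (ω * Q)) :
    ∀ w : Matrix (Fin d) (Fin K) ℝ, w ≠ ω →
      (∑ i, l ((X * ω) i) (y i)) + (lam₀ / 2) * ∑ i, ∑ k, (ω i k) ^ 2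
        < (∑ i, l ((X * w) i) (y i)) + (lam₀ / 2) * ∑ i, ∑ k, (w i k) ^ 2 := by
  intro w hw
  set F : Matrix (Fin n) (Fin K) ℝ := Matrix.of (fun i => mprox (γ i) (y i) - γ i) with hF
  set δ : Matrix (Fin d) (Fin K) ℝ := w - ω with hδ
  -- rows of X * ω are exactly the prox points
  have hrow : ∀ i, (X * ω) i = mprox (γ i) (y i) := by
    intro i
    have h1 : (X * ω) i = γ i + F i := by
      rw [hfix1]; funext k
      simp [hF, Matrix.sub_apply]
    rw [h1]; funext k
    simp [hF]
  -- the matrix identity Xᵀ * F * V = lam₀ • ω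
  have hXF : Xᵀ * F = ω + ((n : ℝ) / d) • (ω * Q) := by
    have h2 := hfix2
    rw [eq_sub_iff_add_eq] at h2
    exact h2.symm
  have hkeymat : Xᵀ * F * V = lam₀ • ω := by
    calc Xᵀ * F * V = (ω + ((n : ℝ) / d) • (ω * Q)) * V := by rw [hXF]
      _ = ω * V + ω * (((n : ℝ) / d) • (Q * V)) := by
          rw [Matrix.add_mul, Matrix.smul_mul, Matrix.mul_smul, Matrix.mul_assoc]
      _ = ω * V + ω * (lam₀ • (1 : Matrix (Fin K) (Fin K) ℝ) - V) := by rw [hQ]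
      _ = lam₀ • ω := by
          rw [Matrix.mul_sub, Matrix.mul_smul, Matrix.mul_one]
          abel
  -- per-row convexity inequality
  have hptwise : ∀ i, l ((X * ω) i) (y i) + ((γ i - (X * ω) i) ᵥ* V ⬝ᵥ ((X * δ) i))
      ≤ l ((X * w) i) (y i) := by
    intro i
    have hi := prox_grad_ineq hV (fun θ => l θ (y i)) (hconv (y i)) (γ i)
      (mprox (γ i) (y i)) (hm (γ i) (y i)) ((X * δ) i)
    have hrw : mprox (γ i) (y i) + (X * δ) i = (X * w) i := by
      rw [← hrow i]
      funext k
      have h3 : (X * δ) i k = (X * w) i k - (X * ω) i k := by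
        simp [hδ, Matrix.mul_sub, Matrix.sub_apply]
      simp [h3]
    rw [hrw] at hi
    rw [hrow i]
    exact hi
  -- γ i - (X*ω) i = -(F i)
  have hnegF : ∀ i, γ i - (X * ω) i = -(F i) := by
    intro i
    rw [hrow i]
    funext k
    simp [hF]
  -- sum manipulation: ∑ i, (F i) ᵥ* V ⬝ᵥ (X*δ) i = lam₀ * ∑ p, ∑ k, ω p k * δ p k
  have hsum : (∑ i, (F i) ᵥ* V ⬝ᵥ ((X * δ) i)) = lam₀ * ∑ p, ∑ k, ω p k * δ p k := by
    have step1 : (∑ i, (F i) ᵥ* V ⬝ᵥ ((X * δ) i))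
        = ∑ i, ∑ k, (F * V) i k * (X * δ) i k := by
      refine Finset.sum_congr rfl fun i _ => ?_
      simp only [Matrix.vecMul, dotProduct, Matrix.mul_apply, Finset.sum_mul]
    have step2 : (∑ i, ∑ k, (F * V) i k * (X * δ) i k)
        = ∑ p, ∑ k, (Xᵀ * F * V) p k * δ p k := by
      have expand : ∀ i k, (F * V) i k * (X * δ) i k
          = ∑ p, X i p * ((F * V) i k * δ p k) := by
        intro i k
        have hXd : (X * δ) i k = ∑ p, X i p * δ p k := Matrix.mul_apply
        rw [hXd, Finset.mul_sum]
        exact Finset.sum_congr rfl fun p _ => by ring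
      calc (∑ i, ∑ k, (F * V) i k * (X * δ) i k)
          = ∑ i, ∑ k, ∑ p, X i p * ((F * V) i k * δ p k) := by
            refine Finset.sum_congr rfl fun i _ => Finset.sum_congr rfl fun k _ => expand i k
        _ = ∑ i, ∑ p, ∑ k, X i p * ((F * V) i k * δ p k) :=
            Finset.sum_congr rfl fun i _ => Finset.sum_comm
        _ = ∑ p, ∑ i, ∑ k, X i p * ((F * V) i k * δ p k) := Finset.sum_comm
        _ = ∑ p, ∑ k, ∑ i, X i p * ((F * V) i k * δ p k) :=
            Finset.sum_congr rfl fun p _ => Finset.sum_comm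
        _ = ∑ p, ∑ k, (Xᵀ * F * V) p k * δ p k := by
            refine Finset.sum_congr rfl fun p _ => Finset.sum_congr rfl fun k _ => ?_
            rw [Matrix.mul_assoc, Matrix.mul_apply, Finset.sum_mul]
            refine Finset.sum_congr rfl fun i _ => ?_
            simp only [Matrix.transpose_apply]
            rw [Matrix.mul_apply]
            ring
    rw [step1, step2, hkeymat, Finset.mul_sum]
    refine Finset.sum_congr rfl fun p _ => ?_
    rw [Finset.mul_sum]
    refine Finset.sum_congr rfl fun k _ => ?_
    simp only [Matrix.smul_apply, smul_eq_mul]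
    ring
  -- sum of pointwise inequalities
  have hsumineq : (∑ i, l ((X * ω) i) (y i)) - (∑ i, (F i) ᵥ* V ⬝ᵥ ((X * δ) i))
      ≤ ∑ i, l ((X * w) i) (y i) := by
    rw [← Finset.sum_sub_distrib]
    refine Finset.sum_le_sum fun i _ => ?_
    have h4 := hptwise i
    rw [hnegF i] at h4
    have hneg : (-(F i)) ᵥ* V ⬝ᵥ ((X * δ) i) = -((F i) ᵥ* V ⬝ᵥ ((X * δ) i)) := by
      rw [Matrix.neg_vecMul, neg_dotProduct]
    rw [hneg] at h4
    linarith
  -- quadratic ridge identity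
  have hridge : (∑ p, ∑ k, (w p k) ^ 2)
      = (∑ p, ∑ k, (ω p k) ^ 2) + 2 * (∑ p, ∑ k, ω p k * δ p k)
        + (∑ p, ∑ k, (δ p k) ^ 2) := by
    have h5 : ∀ p k, (w p k) ^ 2 = (ω p k) ^ 2 + 2 * (ω p k * δ p k) + (δ p k) ^ 2 := by
      intro p k
      have h6 : δ p k = w p k - ω p k := by simp [hδ, Matrix.sub_apply]
      rw [h6]; ring
    simp only [h5, Finset.sum_add_distrib, Finset.mul_sum]
  -- positivity of ∑ δ²
  have hδne : δ ≠ 0 := sub_ne_zero_of_ne hw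
  have hδpos : 0 < ∑ p, ∑ k, (δ p k) ^ 2 := by
    obtain ⟨p, k, hpk⟩ : ∃ p k, δ p k ≠ 0 := by
      by_contra hcon
      push_neg at hcon
      exact hδne (by funext p k; exact hcon p k)
    have h1 : 0 < ∑ k, (δ p k) ^ 2 :=
      Finset.sum_pos' (fun k _ => sq_nonneg _)
        ⟨k, Finset.mem_univ k, pow_two_pos_of_ne_zero hpk⟩
    exact Finset.sum_pos' (fun q _ => Finset.sum_nonneg fun k _ => sq_nonneg _)
      ⟨p, Finset.mem_univ p, h1⟩
  -- combine everything
  have hmain := hsumineq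
  rw [hsum] at hmain
  nlinarith [hridge, hδpos, hmain]
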